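/- Let C be an [n, N] systematic linear code with bipartite graph G_C (left nodes = message symbols, right nodes = parity symbols, edge iff a message symbol participates in a parity). If there is an induced subgraph of G_C obtained by restricting to a subset of right nodes, in which every left node has degree at least k and which has girth at least 8, then C is an (n, N, k, N) primitive multiset batch code. -/

import Mathlib

open scoped Classical

def No4Cycle {V1 V2 : Type*} (E : V1 → V2 → Prop) : Prop :=
  ∀ x1 x2 c1 c2, x1 ≠ x2 → c1 ≠ c2 → E x1 c1 → E x1 c2 → E x2 c1 → E x2 c2 → False

def No6Cycle {V1 V2 : Type*} (E : V1 → V2 → Prop) : Prop :=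
  ∀ x1 x2 x3 c1 c2 c3, x1 ≠ x2 → x1 ≠ x3 → x2 ≠ x3 → c1 ≠ c2 → c1 ≠ c3 → c2 ≠ c3 →
    E x1 c1 → E x2 c1 → E x2 c2 → E x3 c2 → E x3 c3 → E x1 c3 → False

def IsPrimitiveMultisetBatchCode (F : Type*) {μ ι : Type*} (k : ℕ)
    (C : (μ → F) → ι → F) : Prop :=
  ∀ req : Fin k → μ, ∃ S : Fin k → Set ι,
    (∀ i j : Fin k, i ≠ j → Disjoint (S i) (S j)) ∧
    ∀ j : Fin k, ∃ dec : (S j → F) → F,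
      ∀ x : μ → F, dec (fun b => C x b.1) = x (req j)

section BatchAux

variable {F : Type*} [Field F] {n p k : ℕ}

/-- `j` is the first request of its symbol. -/
def BFirst (req : Fin k → Fin n) (j : Fin k) : Prop :=
  ∀ j' : Fin k, j' < j → req j' ≠ req j

/-- the choice `g j` of a parity node for an extra request `j` is good. -/
def BGood (Emat : Matrix (Fin n) (Fin p) F) (V2' : Set (Fin p)) (req : Fin k → Fin n)
    (g : Fin k → Fin p) (j : Fin k) : Prop :=
  g j ∈ V2' ∧ Emat (req j) (g j) ≠ 0 ∧
  (∀ j'' : Fin k, req j'' ≠ req j → Emat (req j'') (g j) = 0) ∧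
  (∀ j' : Fin k, j' < j → ¬ BFirst req j' →
    g j' ≠ g j ∧
    (req j' ≠ req j → ∀ i : Fin n, i ≠ req j → i ≠ req j' →
      Emat i (g j) ≠ 0 → Emat i (g j') = 0))

lemma bgood_congr {Emat : Matrix (Fin n) (Fin p) F} {V2' : Set (Fin p)}
    {req : Fin k → Fin n} {g g' : Fin k → Fin p} {j : Fin k}
    (h : ∀ j' : Fin k, j' ≤ j → g j' = g' j')
    (hgj : BGood Emat V2' req g j) : BGood Emat V2' req g' j := by
  obtain ⟨a, b, c, d⟩ := hgj
  rw [h j le_rfl] at a b c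
  refine ⟨a, b, c, fun j' hlt hfst => ?_⟩
  have hd := d j' hlt hfst
  rw [h j' (le_of_lt hlt), h j le_rfl] at hd
  exact hd

lemma exists_good_c
    (Emat : Matrix (Fin n) (Fin p) F) (V2' : Set (Fin p)) (req : Fin k → Fin n)
    (hdeg : ∀ i : Fin n, ∃ s : Finset (Fin p),
      k ≤ s.card ∧ ∀ j ∈ s, j ∈ V2' ∧ Emat i j ≠ 0)
    (h4 : No4Cycle (fun (i : Fin n) (j : V2') => Emat i j.1 ≠ 0))
    (h6 : No6Cycle (fun (i : Fin n) (j : V2') => Emat i j.1 ≠ 0))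
    (j : Fin k) (hj : ¬ BFirst req j) (g : Fin k → Fin p)
    (hg : ∀ j' : Fin k, j' < j → ¬ BFirst req j' →
      g j' ∈ V2' ∧ Emat (req j') (g j') ≠ 0) :
    ∃ c : Fin p, c ∈ V2' ∧ Emat (req j) c ≠ 0 ∧
      (∀ j'' : Fin k, req j'' ≠ req j → Emat (req j'') c = 0) ∧
      (∀ j' : Fin k, j' < j → ¬ BFirst req j' →
        g j' ≠ c ∧
        (req j' ≠ req j → ∀ i : Fin n, i ≠ req j → i ≠ req j' →
          Emat i c ≠ 0 → Emat i (g j') = 0)) := by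
  classical
  set m := req j with hm
  obtain ⟨N, hNcard, hN⟩ := hdeg m
  set M : Finset (Fin n) := Finset.image req Finset.univ with hM
  set Xset : Finset (Fin k) := Finset.univ.filter
    (fun j' => j' < j ∧ ¬ BFirst req j' ∧ req j' = m) with hX
  set Yset : Finset (Fin k) := Finset.univ.filter
    (fun j' => j' < j ∧ ¬ BFirst req j' ∧ req j' ≠ m) with hY
  set A : Finset (Fin p) := N.filter
    (fun c => ∃ j'' : Fin k, req j'' ≠ m ∧ Emat (req j'') c ≠ 0) with hA
  set U : Finset (Fin p) := N.filter (fun c => ∃ j' ∈ Xset, g j' = c) with hU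
  set Cf : Finset (Fin p) := N.filter
    (fun c => ∃ j' ∈ Yset, g j' ≠ c ∧ ∃ i : Fin n, i ≠ m ∧ i ≠ req j' ∧
      Emat i c ≠ 0 ∧ Emat i (g j') ≠ 0) with hCf
  have hMm : m ∈ M := by
    rw [hM]; exact Finset.mem_image_of_mem req (Finset.mem_univ j)
  -- card A ≤ card (M.erase m)
  have hAcard : A.card ≤ (M.erase m).card := by
    apply Finset.card_le_card_of_injOn
      (fun c => if h : ∃ j'' : Fin k, req j'' ≠ m ∧ Emat (req j'') c ≠ 0
                then req h.choose else m)
    · intro c hc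
      replace hc : c ∈ A := hc
      rw [hA, Finset.mem_filter] at hc
      obtain ⟨hcN, hex⟩ := hc
      beta_reduce
      rw [dif_pos hex]
      exact Finset.mem_erase.mpr ⟨hex.choose_spec.1, by
        rw [hM]; exact Finset.mem_image_of_mem req (Finset.mem_univ _)⟩
    · intro c1 hc1 c2 hc2 heq
      by_contra hne
      replace hc1 : c1 ∈ A := hc1
      replace hc2 : c2 ∈ A := hc2
      rw [hA, Finset.mem_filter] at hc1 hc2
      obtain ⟨hc1N, hex1⟩ := hc1
      obtain ⟨hc2N, hex2⟩ := hc2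
      simp only [dif_pos hex1, dif_pos hex2] at heq
      obtain ⟨hne1, hE1⟩ := hex1.choose_spec
      obtain ⟨hne2, hE2⟩ := hex2.choose_spec
      have hc1V := (hN c1 hc1N).1
      have hc2V := (hN c2 hc2N).1
      exact h4 m (req hex1.choose) ⟨c1, hc1V⟩ ⟨c2, hc2V⟩ (Ne.symm hne1)
        (fun h => hne (congrArg Subtype.val h))
        (hN c1 hc1N).2 (hN c2 hc2N).2 hE1 (heq ▸ hE2)
  -- card U ≤ card Xset
  have hUcard : U.card ≤ Xset.card := by
    apply Finset.card_le_card_of_injOn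
      (fun c => if h : ∃ j' ∈ Xset, g j' = c then h.choose else j)
    · intro c hc
      replace hc : c ∈ U := hc
      rw [hU, Finset.mem_filter] at hc
      beta_reduce
      rw [dif_pos hc.2]
      exact hc.2.choose_spec.1
    · intro c1 hc1 c2 hc2 heq
      replace hc1 : c1 ∈ U := hc1
      replace hc2 : c2 ∈ U := hc2
      rw [hU, Finset.mem_filter] at hc1 hc2
      simp only [dif_pos hc1.2, dif_pos hc2.2] at heq
      have e1 := hc1.2.choose_spec.2
      have e2 := hc2.2.choose_spec.2
      rw [← e1, ← e2, heq]
  -- card Cf ≤ card Yset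
  have hCcard : Cf.card ≤ Yset.card := by
    apply Finset.card_le_card_of_injOn
      (fun c => if h : ∃ j' ∈ Yset, g j' ≠ c ∧ ∃ i : Fin n, i ≠ m ∧ i ≠ req j' ∧
          Emat i c ≠ 0 ∧ Emat i (g j') ≠ 0 then h.choose else j)
    · intro c hc
      replace hc : c ∈ Cf := hc
      rw [hCf, Finset.mem_filter] at hc
      beta_reduce
      rw [dif_pos hc.2]
      exact hc.2.choose_spec.1
    · intro c1 hc1 c2 hc2 heq
      by_contra hne
      replace hc1 : c1 ∈ Cf := hc1
      replace hc2 : c2 ∈ Cf := hc2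
      rw [hCf, Finset.mem_filter] at hc1 hc2
      obtain ⟨hc1N, hex1⟩ := hc1
      obtain ⟨hc2N, hex2⟩ := hc2
      simp only [dif_pos hex1, dif_pos hex2] at heq
      set j1 := hex1.choose with hj1
      obtain ⟨hj1Y, hgj1ne, i1, hi1m, hi1j1, hi1c1, hi1g⟩ := hex1.choose_spec
      obtain ⟨hj2Y, hgj2ne, i2, hi2m, hi2j2, hi2c2, hi2g⟩ := hex2.choose_spec
      rw [← heq] at hi2g hgj2ne hi2j2
      -- now both conflicts with g j1
      obtain ⟨-, hlt1, hfst1, hreq1⟩ := Finset.mem_filter.mp hj1Y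
      obtain ⟨hgV, hgE⟩ := hg j1 hlt1 hfst1
      have hc1V := (hN c1 hc1N).1
      have hc2V := (hN c2 hc2N).1
      have hmc1 := (hN c1 hc1N).2
      have hmc2 := (hN c2 hc2N).2
      have hii : i1 ≠ i2 := by
        intro h
        subst h
        exact h4 m i1 ⟨c1, hc1V⟩ ⟨c2, hc2V⟩ (Ne.symm hi1m)
          (fun h => hne (congrArg Subtype.val h)) hmc1 hmc2 hi1c1 hi2c2
      exact h6 m i1 i2 ⟨c1, hc1V⟩ ⟨g j1, hgV⟩ ⟨c2, hc2V⟩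
        (Ne.symm hi1m) (Ne.symm hi2m) hii
        (fun h => hgj1ne (congrArg Subtype.val h).symm)
        (fun h => hne (congrArg Subtype.val h))
        (fun h => hgj2ne (congrArg Subtype.val h))
        hmc1 hi1c1 hi1g hi2g hi2c2 hmc2
  -- counting: (M.erase m).card + Xset.card + Yset.card + 2 ≤ k
  have hcount : (M.erase m).card + Xset.card + Yset.card + 2 ≤ k := by
    have hfib : (Finset.univ : Finset (Fin k)).card
        = ∑ m' ∈ M, (Finset.univ.filter (fun j' => req j' = m')).card :=
      Finset.card_eq_sum_card_fiberwise (fun x _ => by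
        rw [hM]; exact Finset.mem_image_of_mem req (Finset.mem_univ x))
    have hXbound : Xset.card + 2 ≤ (Finset.univ.filter (fun j' => req j' = m)).card := by
      have hjm : j ∈ Finset.univ.filter (fun j' : Fin k => req j' = m) := by
        simp [hm]
      have hne : (Finset.univ.filter (fun j' : Fin k => req j' = m)).Nonempty := ⟨j, hjm⟩
      set j0 := (Finset.univ.filter (fun j' : Fin k => req j' = m)).min' hne with hj0
      have hj0mem := Finset.min'_mem _ hne
      have hj0m : req j0 = m := (Finset.mem_filter.mp hj0mem).2
      have hj0first : BFirst req j0 := by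
        intro j' hlt hreq
        have : j' ∈ Finset.univ.filter (fun j' : Fin k => req j' = m) := by
          simp [hreq, hj0m]
        exact absurd (Finset.min'_le _ _ this) (not_le.mpr hlt)
      have hj0nej : j0 ≠ j := fun h => hj (h ▸ hj0first)
      have hjX : j ∉ Xset := by
        rw [hX]; simp only [Finset.mem_filter, Finset.mem_univ, true_and]
        intro h; exact absurd h.1 (lt_irrefl j)
      have hj0X : j0 ∉ insert j Xset := by
        rw [Finset.mem_insert]
        rintro (h | h)
        · exact hj0nej h
        · rw [hX] at h
          simp only [Finset.mem_filter, Finset.mem_univ, true_and] at h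
          exact h.2.1 hj0first
      have hsub : insert j0 (insert j Xset) ⊆ Finset.univ.filter (fun j' => req j' = m) := by
        intro a ha
        rw [Finset.mem_insert, Finset.mem_insert] at ha
        rcases ha with h | h | h
        · subst h; exact hj0mem
        · subst h; exact hjm
        · rw [hX] at h
          simp only [Finset.mem_filter, Finset.mem_univ, true_and] at h ⊢
          exact h.2.2
      calc Xset.card + 2 = (insert j0 (insert j Xset)).card := by
            rw [Finset.card_insert_of_notMem hj0X, Finset.card_insert_of_notMem hjX]
          _ ≤ _ := Finset.card_le_card hsub
    have hYsum : Yset.card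
        = ∑ m' ∈ M.erase m, (Yset.filter (fun j' => req j' = m')).card :=
      Finset.card_eq_sum_card_fiberwise (fun x hx => by
        simp only [Finset.mem_coe, hY, Finset.mem_filter] at hx
        exact Finset.mem_erase.mpr ⟨hx.2.2.2, by
          rw [hM]; exact Finset.mem_image_of_mem req (Finset.mem_univ x)⟩)
    have hper : ∀ m' ∈ M.erase m,
        (Yset.filter (fun j' => req j' = m')).card + 1
          ≤ (Finset.univ.filter (fun j' => req j' = m')).card := by
      intro m' hm'
      obtain ⟨hnem', hm'M⟩ := Finset.mem_erase.mp hm'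
      rw [hM, Finset.mem_image] at hm'M
      obtain ⟨j'', -, hj''⟩ := hm'M
      have hne : (Finset.univ.filter (fun j' : Fin k => req j' = m')).Nonempty :=
        ⟨j'', by simp [hj'']⟩
      set j0 := (Finset.univ.filter (fun j' : Fin k => req j' = m')).min' hne with hj0
      have hj0mem := Finset.min'_mem _ hne
      have hj0m : req j0 = m' := (Finset.mem_filter.mp hj0mem).2
      have hj0first : BFirst req j0 := by
        intro j' hlt hreq
        have : j' ∈ Finset.univ.filter (fun j' : Fin k => req j' = m') := by
          simp [hreq, hj0m]
        exact absurd (Finset.min'_le _ _ this) (not_le.mpr hlt)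
      have hj0Y : j0 ∉ Yset.filter (fun j' => req j' = m') := by
        rw [Finset.mem_filter, hY, Finset.mem_filter]
        rintro ⟨⟨-, -, hf, -⟩, -⟩
        exact hf hj0first
      have hsub : insert j0 (Yset.filter (fun j' => req j' = m'))
          ⊆ Finset.univ.filter (fun j' => req j' = m') := by
        intro a ha
        rw [Finset.mem_insert] at ha
        rcases ha with h | h
        · subst h; exact hj0mem
        · rw [Finset.mem_filter] at h
          simp only [Finset.mem_filter, Finset.mem_univ, true_and]
          exact h.2
      calc (Yset.filter (fun j' => req j' = m')).card + 1
          = (insert j0 (Yset.filter (fun j' => req j' = m'))).card := by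
            rw [Finset.card_insert_of_notMem hj0Y]
        _ ≤ _ := Finset.card_le_card hsub
    have hsum1 : ∑ m' ∈ M.erase m, ((Yset.filter (fun j' => req j' = m')).card + 1)
        ≤ ∑ m' ∈ M.erase m, (Finset.univ.filter (fun j' => req j' = m')).card :=
      Finset.sum_le_sum hper
    rw [Finset.sum_add_distrib, Finset.sum_const, smul_eq_mul, mul_one, ← hYsum] at hsum1
    have hsum2 : ∑ m' ∈ M.erase m, (Finset.univ.filter (fun j' => req j' = m')).card
        + (Finset.univ.filter (fun j' => req j' = m)).card
        = ∑ m' ∈ M, (Finset.univ.filter (fun j' => req j' = m')).card :=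
      Finset.sum_erase_add M _ hMm
    have hk : (Finset.univ : Finset (Fin k)).card = k := by simp
    omega
  -- choose c
  have hUnion : A ∪ U ∪ Cf ⊆ N := by
    intro c hc
    rw [Finset.mem_union, Finset.mem_union] at hc
    rcases hc with (h | h) | h
    · exact (Finset.mem_filter.mp h).1
    · exact (Finset.mem_filter.mp h).1
    · exact (Finset.mem_filter.mp h).1
  have hlt : (A ∪ U ∪ Cf).card < N.card := by
    have h1 : (A ∪ U ∪ Cf).card ≤ A.card + U.card + Cf.card := by
      calc (A ∪ U ∪ Cf).card ≤ (A ∪ U).card + Cf.card := Finset.card_union_le _ _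
        _ ≤ A.card + U.card + Cf.card := by
            have := Finset.card_union_le A U; omega
    omega
  have hnonempty : (N \ (A ∪ U ∪ Cf)).Nonempty := by
    rw [← Finset.card_pos, Finset.card_sdiff_of_subset hUnion]
    omega
  obtain ⟨c, hc⟩ := hnonempty
  rw [Finset.mem_sdiff] at hc
  obtain ⟨hcN, hcB⟩ := hc
  have hcA : c ∉ A := fun h => hcB (Finset.mem_union_left _ (Finset.mem_union_left _ h))
  have hcU : c ∉ U := fun h => hcB (Finset.mem_union_left _ (Finset.mem_union_right _ h))
  have hcC : c ∉ Cf := fun h => hcB (Finset.mem_union_right _ h)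
  refine ⟨c, (hN c hcN).1, (hN c hcN).2, ?_, ?_⟩
  · intro j'' hj''
    by_contra hE
    exact hcA (Finset.mem_filter.mpr ⟨hcN, j'', hj'', hE⟩)
  · intro j' hlt' hfst'
    have hgne : g j' ≠ c := by
      intro hgc
      by_cases hreq : req j' = m
      · exact hcU (Finset.mem_filter.mpr ⟨hcN, j', by
          rw [hX]; simp only [Finset.mem_filter, Finset.mem_univ, true_and]
          exact ⟨hlt', hfst', hreq⟩, hgc⟩)
      · refine hcA (Finset.mem_filter.mpr ⟨hcN, j', hreq, ?_⟩)
        rw [← hgc]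
        exact (hg j' hlt' hfst').2
    refine ⟨hgne, ?_⟩
    intro hreq i him hij' hEc
    by_contra hEg
    refine hcC (Finset.mem_filter.mpr ⟨hcN, j', ?_, hgne, i, him, hij', hEc, hEg⟩)
    rw [hY]; simp only [Finset.mem_filter, Finset.mem_univ, true_and]
    exact ⟨hlt', hfst', hreq⟩

lemma exists_g
    (Emat : Matrix (Fin n) (Fin p) F) (V2' : Set (Fin p)) (req : Fin k → Fin n)
    (c0 : Fin p)
    (hdeg : ∀ i : Fin n, ∃ s : Finset (Fin p),
      k ≤ s.card ∧ ∀ j ∈ s, j ∈ V2' ∧ Emat i j ≠ 0)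
    (h4 : No4Cycle (fun (i : Fin n) (j : V2') => Emat i j.1 ≠ 0))
    (h6 : No6Cycle (fun (i : Fin n) (j : V2') => Emat i j.1 ≠ 0)) :
    ∃ g : Fin k → Fin p, ∀ j : Fin k, ¬ BFirst req j → BGood Emat V2' req g j := by
  suffices h : ∀ t : ℕ, ∃ g : Fin k → Fin p,
      ∀ j : Fin k, j.val < t → ¬ BFirst req j → BGood Emat V2' req g j by
    obtain ⟨g, hg⟩ := h k
    exact ⟨g, fun j => hg j j.isLt⟩
  intro t
  induction t with
  | zero => exact ⟨fun _ => c0, fun j hj => absurd hj (Nat.not_lt_zero _)⟩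
  | succ t ih =>
    obtain ⟨g, hg⟩ := ih
    by_cases ht : t < k
    · set jt : Fin k := ⟨t, ht⟩ with hjt
      by_cases hf : BFirst req jt
      · refine ⟨g, fun j hjlt hjf => ?_⟩
        have : j.val < t := by
          rcases Nat.lt_succ_iff_lt_or_eq.mp hjlt with h | h
          · exact h
          · exfalso; apply hjf; have : j = jt := Fin.ext h; rw [this]; exact hf
        exact hg j this hjf
      · obtain ⟨c, hcV, hcE, hcadj, hcconf⟩ :=
          exists_good_c Emat V2' req hdeg h4 h6 jt hf g
            (fun j' hlt hfst =>
              ⟨(hg j' (by exact hlt) hfst).1, (hg j' hlt hfst).2.1⟩)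
        refine ⟨Function.update g jt c, fun j hjlt hjf => ?_⟩
        by_cases hjeq : j = jt
        · subst hjeq
          refine ⟨?_, ?_, ?_, ?_⟩
          · rw [Function.update_self]; exact hcV
          · rw [Function.update_self]; exact hcE
          · intro j'' hj''; rw [Function.update_self]; exact hcadj j'' hj''
          · intro j' hlt hfst
            have hj'ne : j' ≠ jt := ne_of_lt hlt
            rw [Function.update_self, Function.update_of_ne hj'ne]
            exact hcconf j' hlt hfst
        · have hjlt' : j.val < t := by
            rcases Nat.lt_succ_iff_lt_or_eq.mp hjlt with h | h
            · exact h
            · exact absurd (Fin.ext h) hjeq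
          refine bgood_congr (fun j' hle => ?_) (hg j hjlt' hjf)
          have : j' ≠ jt := by
            intro h
            apply hjeq
            have h1 : j'.val < t := lt_of_le_of_lt (Fin.le_iff_val_le_val.mp hle) hjlt'
            rw [h] at h1
            exact absurd h1 (lt_irrefl t)
          rw [Function.update_of_ne this]
    · refine ⟨g, fun j hjlt hjf => hg j ?_ hjf⟩
      have := j.isLt
      omega

end BatchAux

theorem stmt_13 {F : Type*} [Field F] (n p k : ℕ)
    (Emat : Matrix (Fin n) (Fin p) F) (V2' : Set (Fin p))
    (hdeg : ∀ i : Fin n, ∃ s : Finset (Fin p),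
      k ≤ s.card ∧ ∀ j ∈ s, j ∈ V2' ∧ Emat i j ≠ 0)
    (h4 : No4Cycle (fun (i : Fin n) (j : V2') => Emat i j.1 ≠ 0))
    (h6 : No6Cycle (fun (i : Fin n) (j : V2') => Emat i j.1 ≠ 0)) :
    IsPrimitiveMultisetBatchCode F k
      (fun x : Fin n → F =>
        Sum.elim x (fun j : Fin p => ∑ i : Fin n, Emat i j * x i)) := by
  intro req
  rcases Nat.eq_zero_or_pos k with hk | hk
  · subst hk
    exact ⟨fun _ => ∅, fun i => i.elim0, fun j => j.elim0⟩
  · have hc0 : Nonempty (Fin p) := by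
      obtain ⟨s, hs, -⟩ := hdeg (req ⟨0, hk⟩)
      obtain ⟨c, -⟩ := Finset.card_pos.mp (lt_of_lt_of_le hk hs)
      exact ⟨c⟩
    obtain ⟨c0⟩ := hc0
    obtain ⟨g, hg⟩ := exists_g Emat V2' req c0 hdeg h4 h6
    set S : Fin k → Set (Fin n ⊕ Fin p) := fun j =>
      if BFirst req j then {Sum.inl (req j)}
      else insert (Sum.inr (g j))
        {b | ∃ i : Fin n, i ≠ req j ∧ Emat i (g j) ≠ 0 ∧ b = Sum.inl i} with hS
    have hmemF : ∀ (j : Fin k) (b : Fin n ⊕ Fin p), BFirst req j →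
        (b ∈ S j ↔ b = Sum.inl (req j)) := by
      intro j b hf
      rw [hS]; simp only [if_pos hf, Set.mem_singleton_iff]
    have hmemE : ∀ (j : Fin k) (b : Fin n ⊕ Fin p), ¬ BFirst req j →
        (b ∈ S j ↔ b = Sum.inr (g j) ∨
          ∃ i : Fin n, i ≠ req j ∧ Emat i (g j) ≠ 0 ∧ b = Sum.inl i) := by
      intro j b hf
      rw [hS]; simp only [if_neg hf, Set.mem_insert_iff, Set.mem_setOf_eq]
    have key : ∀ j1 j2 : Fin k, j1 < j2 → Disjoint (S j1) (S j2) := by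
      intro j1 j2 h12
      rw [Set.disjoint_left]
      intro b hb1 hb2
      by_cases hf1 : BFirst req j1 <;> by_cases hf2 : BFirst req j2
      · rw [hmemF j1 b hf1] at hb1
        rw [hmemF j2 b hf2] at hb2
        rw [hb1] at hb2
        exact hf2 j1 h12 (Sum.inl.inj hb2)
      · rw [hmemF j1 b hf1] at hb1
        rw [hmemE j2 b hf2] at hb2
        obtain ⟨hgV2, hgE2, hadj2, hconf2⟩ := hg j2 hf2
        rcases hb2 with h | ⟨i, hine, hiE, hieq⟩
        · rw [hb1] at h; exact Sum.inl_ne_inr h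
        · rw [hb1] at hieq
          have : i = req j1 := (Sum.inl.inj hieq).symm
          subst this
          by_cases hreq : req j1 = req j2
          · exact hine hreq
          · exact hiE (hadj2 j1 hreq)
      · rw [hmemF j2 b hf2] at hb2
        rw [hmemE j1 b hf1] at hb1
        obtain ⟨hgV1, hgE1, hadj1, hconf1⟩ := hg j1 hf1
        rcases hb1 with h | ⟨i, hine, hiE, hieq⟩
        · rw [hb2] at h; exact Sum.inl_ne_inr h
        · rw [hb2] at hieq
          have : i = req j2 := (Sum.inl.inj hieq).symm
          subst this
          by_cases hreq : req j2 = req j1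
          · exact hine hreq
          · exact hiE (hadj1 j2 hreq)
      · rw [hmemE j1 b hf1] at hb1
        rw [hmemE j2 b hf2] at hb2
        obtain ⟨hgV1, hgE1, hadj1, hconf1⟩ := hg j1 hf1
        obtain ⟨hgV2, hgE2, hadj2, hconf2⟩ := hg j2 hf2
        have hgne : g j1 ≠ g j2 := (hconf2 j1 h12 hf1).1
        rcases hb1 with h1 | ⟨i1, hi1ne, hi1E, hi1eq⟩ <;>
          rcases hb2 with h2 | ⟨i2, hi2ne, hi2E, hi2eq⟩
        · rw [h1] at h2; exact hgne (Sum.inr.inj h2)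
        · rw [h1] at hi2eq; exact Sum.inr_ne_inl hi2eq
        · rw [hi1eq] at h2; exact Sum.inl_ne_inr h2
        · rw [hi1eq] at hi2eq
          obtain rfl : i1 = i2 := Sum.inl.inj hi2eq
          by_cases hreq : req j1 = req j2
          · refine h4 i1 (req j2) ⟨g j1, hgV1⟩ ⟨g j2, hgV2⟩ hi2ne
              (fun h => hgne (congrArg Subtype.val h)) hi1E hi2E ?_ hgE2
            rw [← hreq]; exact hgE1
          · exact hi1E ((hconf2 j1 h12 hf1).2 hreq i1 hi2ne hi1ne hi2E)
    refine ⟨S, ?_, ?_⟩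
    · intro i j hij
      rcases lt_or_gt_of_ne hij with h | h
      · exact key i j h
      · exact (key j i h).symm
    · intro j
      by_cases hf : BFirst req j
      · refine ⟨fun f => f ⟨Sum.inl (req j), ?_⟩, ?_⟩
        · rw [hmemF j _ hf]
        · intro x
          simp only [Sum.elim_inl]
      · obtain ⟨hgV, hgE, hadj, hconf⟩ := hg j hf
        set T : Finset (Fin n) :=
          Finset.univ.filter (fun i => i ≠ req j ∧ Emat i (g j) ≠ 0) with hT
        have hmemr : Sum.inr (g j) ∈ S j := by
          rw [hmemE j _ hf]; exact Or.inl rfl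
        have hmeml : ∀ i ∈ T, Sum.inl i ∈ S j := by
          intro i hi
          rw [hT, Finset.mem_filter] at hi
          rw [hmemE j _ hf]
          exact Or.inr ⟨i, hi.2.1, hi.2.2, rfl⟩
        refine ⟨fun f => (f ⟨Sum.inr (g j), hmemr⟩
          - ∑ i ∈ T.attach, Emat i.1 (g j) * f ⟨Sum.inl i.1, hmeml i.1 i.2⟩)
            / Emat (req j) (g j), ?_⟩
        intro x
        simp only [Sum.elim_inl, Sum.elim_inr]
        rw [Finset.sum_attach T (fun i => Emat i (g j) * x i)]
        have hsplit : ∑ i : Fin n, Emat i (g j) * x i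
            = Emat (req j) (g j) * x (req j) + ∑ i ∈ T, Emat i (g j) * x i := by
          rw [← Finset.add_sum_erase Finset.univ
            (fun i => Emat i (g j) * x i) (Finset.mem_univ (req j))]
          congr 1
          refine (Finset.sum_subset ?_ ?_).symm
          · intro i hi
            rw [hT, Finset.mem_filter] at hi
            exact Finset.mem_erase.mpr ⟨hi.2.1, Finset.mem_univ i⟩
          · intro i hi hiT
            rw [Finset.mem_erase] at hi
            rw [hT, Finset.mem_filter] at hiT
            have : Emat i (g j) = 0 := by
              by_contra hE
              exact hiT ⟨Finset.mem_univ i, hi.1, hE⟩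
            rw [this, zero_mul]
        rw [hsplit, add_sub_cancel_right]
        exact mul_div_cancel_left₀ _ hgE
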